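/- arXiv:2104.04264 — 5 statements merged into one kernel-verified Lean document; each statement's English description precedes it below -/
import Mathlib

section
/- Let (Ω, F, μ) be a probability space, let R : Ω → ℝ be a random variable, let C, g₀, g₁, g₂, g₃ ∈ ℝ, and define the pricing kernel M := g₀ + g₁(R − C) + g₂(R − C)² + g₃(R − C)³. Assume R, (R − C)^n for n ∈ {1, 2, 3}, R·(R − C)^n for n ∈ {1, 2, 3}, and R·M are integrable, that E[R·M] = 1, and that E[M] ≠ 0. Set R_f := 1 / E[M] and θ_n := −g_n · R_f for n ∈ {1, 2, 3}. Then E[R] − R_f = θ₁·Cov(R, R − C) + θ₂·Cov(R, (R − C)²) + θ₃·Cov(R, (R − C)³). -/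
open MeasureTheory

/-- Covariance of two real random variables: `Cov(X, Y) = E[X·Y] − E[X]·E[Y]`. -/
noncomputable def cov {Ω : Type*} {mΩ : MeasurableSpace Ω} (μ : Measure Ω)
    (X Y : Ω → ℝ) : ℝ :=
  (∫ ω, X ω * Y ω ∂μ) - (∫ ω, X ω ∂μ) * ∫ ω, Y ω ∂μ

/-- For the cubic pricing kernel `M = g₀ + g₁(R − C) + g₂(R − C)² + g₃(R − C)³`, the
Euler equation `E[R·M] = 1` with `R_f = 1/E[M]` and `θ_n = −g_n·R_f` yields
`E[R] − R_f = θ₁·Cov(R, R − C) + θ₂·Cov(R, (R − C)²) + θ₃·Cov(R, (R − C)³)`. -/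
theorem excess_return_cubic_kernel
    {Ω : Type*} {mΩ : MeasurableSpace Ω} {μ : Measure Ω} [IsProbabilityMeasure μ]
    (R M : Ω → ℝ) (C g₀ g₁ g₂ g₃ : ℝ)
    (hMdef : ∀ ω, M ω =
      g₀ + g₁ * (R ω - C) + g₂ * (R ω - C) ^ 2 + g₃ * (R ω - C) ^ 3)
    (hR : Integrable R μ)
    (hpow : ∀ n, 1 ≤ n → n ≤ 3 → Integrable (fun ω => (R ω - C) ^ n) μ)
    (hRpow : ∀ n, 1 ≤ n → n ≤ 3 → Integrable (fun ω => R ω * (R ω - C) ^ n) μ)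
    (hRM : Integrable (fun ω => R ω * M ω) μ)
    (hEuler : ∫ ω, R ω * M ω ∂μ = 1)
    (hEM : (∫ ω, M ω ∂μ) ≠ 0)
    (Rf θ₁ θ₂ θ₃ : ℝ)
    (hRf : Rf = 1 / ∫ ω, M ω ∂μ)
    (hθ₁ : θ₁ = -g₁ * Rf) (hθ₂ : θ₂ = -g₂ * Rf) (hθ₃ : θ₃ = -g₃ * Rf) :
    (∫ ω, R ω ∂μ) - Rf =
      θ₁ * cov μ R (fun ω => R ω - C) +
      θ₂ * cov μ R (fun ω => (R ω - C) ^ 2) +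
      θ₃ * cov μ R (fun ω => (R ω - C) ^ 3) := by
  have h1 : Integrable (fun ω => R ω - C) μ := by
    simpa using hpow 1 le_rfl (by norm_num)
  have h2 := hpow 2 (by norm_num) (by norm_num)
  have h3 := hpow 3 (by norm_num) le_rfl
  have hr1 : Integrable (fun ω => R ω * (R ω - C)) μ := by
    simpa using hRpow 1 le_rfl (by norm_num)
  have hr2 := hRpow 2 (by norm_num) (by norm_num)
  have hr3 := hRpow 3 (by norm_num) le_rfl
  have hMint : Integrable M μ := by
    have : M = fun ω => g₀ + g₁ * (R ω - C) + g₂ * (R ω - C) ^ 2 + g₃ * (R ω - C) ^ 3 :=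
      funext hMdef
    rw [this]
    exact (((integrable_const g₀).add (h1.const_mul g₁)).add (h2.const_mul g₂)).add
      (h3.const_mul g₃)
  have hEMval : ∫ ω, M ω ∂μ =
      g₀ + g₁ * (∫ ω, (R ω - C) ∂μ) + g₂ * (∫ ω, (R ω - C) ^ 2 ∂μ)
        + g₃ * (∫ ω, (R ω - C) ^ 3 ∂μ) := by
    calc ∫ ω, M ω ∂μ
        = ∫ ω, (g₀ + g₁ * (R ω - C) + g₂ * (R ω - C) ^ 2 + g₃ * (R ω - C) ^ 3) ∂μ := by
          exact integral_congr_ae (Filter.Eventually.of_forall hMdef)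
      _ = (∫ ω, (g₀ + g₁ * (R ω - C) + g₂ * (R ω - C) ^ 2) ∂μ)
            + ∫ ω, g₃ * (R ω - C) ^ 3 ∂μ :=
          integral_add (((integrable_const g₀).add (h1.const_mul g₁)).add
            (h2.const_mul g₂)) (h3.const_mul g₃)
      _ = ((∫ ω, (g₀ + g₁ * (R ω - C)) ∂μ) + ∫ ω, g₂ * (R ω - C) ^ 2 ∂μ)
            + ∫ ω, g₃ * (R ω - C) ^ 3 ∂μ := by
          congr 1
          exact integral_add ((integrable_const g₀).add (h1.const_mul g₁)) (h2.const_mul g₂)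
      _ = (((∫ ω, (g₀ : ℝ) ∂μ) + ∫ ω, g₁ * (R ω - C) ∂μ) + ∫ ω, g₂ * (R ω - C) ^ 2 ∂μ)
            + ∫ ω, g₃ * (R ω - C) ^ 3 ∂μ := by
          congr 2
          exact integral_add (integrable_const g₀) (h1.const_mul g₁)
      _ = _ := by
          simp [integral_const_mul]
  have hRMval : ∫ ω, R ω * M ω ∂μ =
      g₀ * (∫ ω, R ω ∂μ) + g₁ * (∫ ω, R ω * (R ω - C) ∂μ)
        + g₂ * (∫ ω, R ω * (R ω - C) ^ 2 ∂μ) + g₃ * (∫ ω, R ω * (R ω - C) ^ 3 ∂μ) := by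
    calc ∫ ω, R ω * M ω ∂μ
        = ∫ ω, (g₀ * R ω + g₁ * (R ω * (R ω - C)) + g₂ * (R ω * (R ω - C) ^ 2)
            + g₃ * (R ω * (R ω - C) ^ 3)) ∂μ := by
          apply integral_congr_ae (Filter.Eventually.of_forall fun ω => ?_)
          rw [hMdef ω]; ring
      _ = (∫ ω, (g₀ * R ω + g₁ * (R ω * (R ω - C)) + g₂ * (R ω * (R ω - C) ^ 2)) ∂μ)
            + ∫ ω, g₃ * (R ω * (R ω - C) ^ 3) ∂μ :=
          integral_add (((hR.const_mul g₀).add (hr1.const_mul g₁)).add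
            (hr2.const_mul g₂)) (hr3.const_mul g₃)
      _ = ((∫ ω, (g₀ * R ω + g₁ * (R ω * (R ω - C))) ∂μ)
            + ∫ ω, g₂ * (R ω * (R ω - C) ^ 2) ∂μ)
            + ∫ ω, g₃ * (R ω * (R ω - C) ^ 3) ∂μ := by
          congr 1
          exact integral_add ((hR.const_mul g₀).add (hr1.const_mul g₁)) (hr2.const_mul g₂)
      _ = (((∫ ω, g₀ * R ω ∂μ) + ∫ ω, g₁ * (R ω * (R ω - C)) ∂μ)
            + ∫ ω, g₂ * (R ω * (R ω - C) ^ 2) ∂μ)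
            + ∫ ω, g₃ * (R ω * (R ω - C) ^ 3) ∂μ := by
          congr 2
          exact integral_add (hR.const_mul g₀) (hr1.const_mul g₁)
      _ = _ := by
          simp [integral_const_mul]
  have hRfEM : Rf * (∫ ω, M ω ∂μ) = 1 := by
    rw [hRf]; field_simp
  rw [hEuler] at hRMval
  subst hθ₁ hθ₂ hθ₃
  unfold cov
  -- Let ER = ∫ R, and express Rf = Rf. Use hRfEM and hEMval, hRMval.
  set ER := ∫ ω, R ω ∂μ
  set A1 := ∫ ω, (R ω - C) ∂μ
  set A2 := ∫ ω, (R ω - C) ^ 2 ∂μ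
  set A3 := ∫ ω, (R ω - C) ^ 3 ∂μ
  set B1 := ∫ ω, R ω * (R ω - C) ∂μ
  set B2 := ∫ ω, R ω * (R ω - C) ^ 2 ∂μ
  set B3 := ∫ ω, R ω * (R ω - C) ^ 3 ∂μ
  rw [hEMval] at hRfEM
  -- goal: ER - Rf = -g₁*Rf*(B1 - ER*A1) + ...
  linear_combination (-ER) * hRfEM - Rf * hRMval
end

section
/- Let (Ω, F, μ) be a probability space, let R : Ω → ℝ be integrable, set ε := R − E[R], and let g₀, g₁, g₂, g₃ ∈ ℝ define the pricing kernel M := g₀ + g₁·ε + g₂·ε² + g₃·ε³. Assume ε^n for n ∈ {1, 2, 3, 4}, R·ε^n for n ∈ {1, 2, 3}, and R·M are integrable, that E[R·M] = 1, and that E[M] ≠ 0. Set R_f := 1 / E[M] and θ_n := −g_n · R_f for n ∈ {1, 2, 3}. Then E[R] − R_f = θ₁·E[ε²] + θ₂·E[ε³] + θ₃·E[ε⁴]. -/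
open MeasureTheory

/-- For the demeaned return `ε = R − E[R]` and the cubic pricing kernel
`M = g₀ + g₁·ε + g₂·ε² + g₃·ε³`, the Euler equation `E[R·M] = 1` with
`R_f = 1/E[M]` and `θ_n = −g_n·R_f` yields
`E[R] − R_f = θ₁·E[ε²] + θ₂·E[ε³] + θ₃·E[ε⁴]`. -/
theorem equity_premium_central_moments
    {Ω : Type*} {mΩ : MeasurableSpace Ω} {μ : Measure Ω} [IsProbabilityMeasure μ]
    (R : Ω → ℝ) (hR : Integrable R μ)
    (ε : Ω → ℝ) (hε : ∀ ω, ε ω = R ω - ∫ x, R x ∂μ)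
    (M : Ω → ℝ) (g₀ g₁ g₂ g₃ : ℝ)
    (hMdef : ∀ ω, M ω = g₀ + g₁ * ε ω + g₂ * ε ω ^ 2 + g₃ * ε ω ^ 3)
    (hεpow : ∀ n, 1 ≤ n → n ≤ 4 → Integrable (fun ω => ε ω ^ n) μ)
    (hRεpow : ∀ n, 1 ≤ n → n ≤ 3 → Integrable (fun ω => R ω * ε ω ^ n) μ)
    (hRM : Integrable (fun ω => R ω * M ω) μ)
    (hEuler : ∫ ω, R ω * M ω ∂μ = 1)
    (hEM : (∫ ω, M ω ∂μ) ≠ 0)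
    (Rf θ₁ θ₂ θ₃ : ℝ)
    (hRf : Rf = 1 / ∫ ω, M ω ∂μ)
    (hθ₁ : θ₁ = -g₁ * Rf) (hθ₂ : θ₂ = -g₂ * Rf) (hθ₃ : θ₃ = -g₃ * Rf) :
    (∫ ω, R ω ∂μ) - Rf =
      θ₁ * (∫ ω, ε ω ^ 2 ∂μ) +
      θ₂ * (∫ ω, ε ω ^ 3 ∂μ) +
      θ₃ * (∫ ω, ε ω ^ 4 ∂μ) := by
  set m : ℝ := ∫ ω, R ω ∂μ with hm
  have hεi : Integrable ε μ := by
    have := hεpow 1 (by norm_num) (by norm_num); simpa using this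
  have hε2 := hεpow 2 (by norm_num) (by norm_num)
  have hε3 := hεpow 3 (by norm_num) (by norm_num)
  have hε4 := hεpow 4 (by norm_num) (by norm_num)
  have hRε1 : Integrable (fun ω => R ω * ε ω) μ := by
    have := hRεpow 1 (by norm_num) (by norm_num); simpa using this
  have hRε2 := hRεpow 2 (by norm_num) (by norm_num)
  have hRε3 := hRεpow 3 (by norm_num) (by norm_num)
  have hEε : ∫ ω, ε ω ∂μ = 0 := by
    have h1 : ∫ ω, ε ω ∂μ = (∫ ω, R ω ∂μ) - ∫ ω, (m : ℝ) ∂μ := by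
      simp only [hε]
      exact integral_sub hR (integrable_const m)
    simp [h1, hm]
  set I2 : ℝ := ∫ ω, ε ω ^ 2 ∂μ with hI2
  set I3 : ℝ := ∫ ω, ε ω ^ 3 ∂μ with hI3
  set I4 : ℝ := ∫ ω, ε ω ^ 4 ∂μ with hI4
  have hRω : ∀ ω, R ω = ε ω + m := fun ω => by rw [hε]; ring
  -- E[R ε^n] = I_{n+1} + m I_n
  have hJ1 : ∫ ω, R ω * ε ω ∂μ = I2 := by
    have heq : (fun ω => R ω * ε ω) = fun ω => ε ω ^ 2 + m * ε ω := by
      funext ω; rw [hRω ω]; ring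
    rw [heq, integral_add hε2 (hεi.const_mul m), integral_const_mul, hEε]
    ring
  have hJ2 : ∫ ω, R ω * ε ω ^ 2 ∂μ = I3 + m * I2 := by
    have heq : (fun ω => R ω * ε ω ^ 2) = fun ω => ε ω ^ 3 + m * ε ω ^ 2 := by
      funext ω; rw [hRω ω]; ring
    rw [heq, integral_add hε3 (hε2.const_mul m), integral_const_mul]
  have hJ3 : ∫ ω, R ω * ε ω ^ 3 ∂μ = I4 + m * I3 := by
    have heq : (fun ω => R ω * ε ω ^ 3) = fun ω => ε ω ^ 4 + m * ε ω ^ 3 := by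
      funext ω; rw [hRω ω]; ring
    rw [heq, integral_add hε4 (hε3.const_mul m), integral_const_mul]
  -- E[M]
  have h23 : Integrable (fun ω => g₂ * ε ω ^ 2 + g₃ * ε ω ^ 3) μ :=
    (hε2.const_mul g₂).add (hε3.const_mul g₃)
  have h123 : Integrable (fun ω => g₁ * ε ω + (g₂ * ε ω ^ 2 + g₃ * ε ω ^ 3)) μ :=
    (hεi.const_mul g₁).add h23
  have hEMval : ∫ ω, M ω ∂μ = g₀ + g₂ * I2 + g₃ * I3 := by
    have heq : M = fun ω => g₀ + (g₁ * ε ω + (g₂ * ε ω ^ 2 + g₃ * ε ω ^ 3)) := by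
      funext ω; rw [hMdef ω]; ring
    rw [heq, integral_add (integrable_const g₀) h123, integral_add (hεi.const_mul g₁) h23,
      integral_add (hε2.const_mul g₂) (hε3.const_mul g₃),
      integral_const_mul, integral_const_mul, integral_const_mul, hEε, ← hI2, ← hI3, integral_const]
    simp only [probReal_univ, ENNReal.toReal_one, smul_eq_mul, one_mul, mul_zero, add_zero]
    ring
  -- E[RM]
  have hr23 : Integrable (fun ω => g₂ * (R ω * ε ω ^ 2) + g₃ * (R ω * ε ω ^ 3)) μ :=
    (hRε2.const_mul g₂).add (hRε3.const_mul g₃)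
  have hr123 : Integrable (fun ω => g₁ * (R ω * ε ω) + (g₂ * (R ω * ε ω ^ 2) + g₃ * (R ω * ε ω ^ 3))) μ :=
    (hRε1.const_mul g₁).add hr23
  have hERM : ∫ ω, R ω * M ω ∂μ
      = g₀ * m + g₁ * I2 + g₂ * (I3 + m * I2) + g₃ * (I4 + m * I3) := by
    have heq : (fun ω => R ω * M ω)
        = fun ω => g₀ * R ω + (g₁ * (R ω * ε ω)
            + (g₂ * (R ω * ε ω ^ 2) + g₃ * (R ω * ε ω ^ 3))) := by
      funext ω; rw [hMdef ω]; ring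
    rw [heq, integral_add (hR.const_mul g₀) hr123, integral_add (hRε1.const_mul g₁) hr23,
      integral_add (hRε2.const_mul g₂) (hRε3.const_mul g₃),
      integral_const_mul, integral_const_mul, integral_const_mul, integral_const_mul,
      hJ1, hJ2, hJ3, ← hm]
    ring
  rw [hEMval] at hEM hRf
  rw [hERM] at hEuler
  have key : m * (g₀ + g₂ * I2 + g₃ * I3) - 1 = -(g₁ * I2 + g₂ * I3 + g₃ * I4) := by
    linear_combination hEuler
  rw [hθ₁, hθ₂, hθ₃, hRf]
  refine mul_right_cancel₀ hEM ?_
  linear_combination key + (g₁ * I2 + g₂ * I3 + g₃ * I4 - 1) * inv_mul_cancel₀ hEM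
end

section
/- Let (Ω, F, μ) be a probability space, let R : Ω → ℝ be integrable, and set ε := R − E[R]. Suppose ε = ε_s + ε_l for random variables ε_s, ε_l with ε_s · ε_l = 0 almost everywhere. Let n ≥ 1 be a natural number and assume ε_s^{n+1}, ε_l^{n+1}, ε^n, and R·ε^n are integrable. Then Cov(R, ε^n) = E[ε_s^{n+1}] + E[ε_l^{n+1}]. -/
open MeasureTheory

/-- If the demeaned return `ε = R − E[R]` splits as `ε = ε_s + ε_l` with
`ε_s · ε_l = 0` a.e., then for `n ≥ 1`,
`Cov(R, ε^n) = E[ε_s^(n+1)] + E[ε_l^(n+1)]`. -/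
theorem cov_pow_demeaned_eq_sum_horizon_moments
    {Ω : Type*} {mΩ : MeasurableSpace Ω} {μ : Measure Ω} [IsProbabilityMeasure μ]
    (R : Ω → ℝ) (hR : Integrable R μ)
    (ε εs εl : Ω → ℝ)
    (hε : ∀ ω, ε ω = R ω - ∫ x, R x ∂μ)
    (hsplit : ∀ ω, ε ω = εs ω + εl ω)
    (horth : ∀ᵐ ω ∂μ, εs ω * εl ω = 0)
    (n : ℕ) (hn : 1 ≤ n)
    (hsn : Integrable (fun ω => εs ω ^ (n + 1)) μ)
    (hln : Integrable (fun ω => εl ω ^ (n + 1)) μ)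
    (hεn : Integrable (fun ω => ε ω ^ n) μ)
    (hRεn : Integrable (fun ω => R ω * ε ω ^ n) μ) :
    cov μ R (fun ω => ε ω ^ n) =
      (∫ ω, εs ω ^ (n + 1) ∂μ) + ∫ ω, εl ω ^ (n + 1) ∂μ := by
  set c : ℝ := ∫ x, R x ∂μ with hc
  have key : (∫ ω, ε ω ^ (n+1) ∂μ) = cov μ R (fun ω => ε ω ^ n) := by
    have hpt : ∀ ω, ε ω ^ (n+1) = R ω * ε ω ^ n - c * ε ω ^ n := by
      intro ω
      rw [pow_succ, hε ω]
      ring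
    calc (∫ ω, ε ω ^ (n+1) ∂μ)
        = ∫ ω, (R ω * ε ω ^ n - c * ε ω ^ n) ∂μ := by
          exact integral_congr_ae (Filter.Eventually.of_forall hpt)
      _ = (∫ ω, R ω * ε ω ^ n ∂μ) - ∫ ω, c * ε ω ^ n ∂μ :=
          integral_sub hRεn (hεn.const_mul c)
      _ = (∫ ω, R ω * ε ω ^ n ∂μ) - c * ∫ ω, ε ω ^ n ∂μ := by
          rw [integral_const_mul]
      _ = cov μ R (fun ω => ε ω ^ n) := rfl
  have hsum : (∫ ω, ε ω ^ (n+1) ∂μ)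
      = (∫ ω, εs ω ^ (n + 1) ∂μ) + ∫ ω, εl ω ^ (n + 1) ∂μ := by
    have hae : ∀ᵐ ω ∂μ, ε ω ^ (n+1) = εs ω ^ (n+1) + εl ω ^ (n+1) := by
      filter_upwards [horth] with ω hω
      rcases mul_eq_zero.1 hω with h | h
      · rw [hsplit ω, h, zero_add, zero_pow (Nat.succ_ne_zero n), zero_add]
      · rw [hsplit ω, h, add_zero, zero_pow (Nat.succ_ne_zero n), add_zero]
    rw [integral_congr_ae hae, integral_add hsn hln]
  rw [← key, hsum]
end

section
/- (Proposition 1, Pricing of Frequency-Dependent Higher Moments.) Let (Ω, F, μ) be a probability space, let R : Ω → ℝ be integrable, set ε := R − E[R], and suppose ε = ε_s + ε_l for random variables ε_s, ε_l with ε_s · ε_l = 0 almost everywhere. Let g₀, g₁, g₂, g₃ ∈ ℝ define the pricing kernel M := g₀ + g₁·ε + g₂·ε² + g₃·ε³, and assume ε_s^n and ε_l^n for n ∈ {2, 3, 4}, ε^n for n ∈ {1, 2, 3, 4}, R·ε^n for n ∈ {1, 2, 3}, and R·M are integrable, that E[R·M] = 1, and that E[M] ≠ 0. Set R_f := 1 /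 E[M] and θ_n := −g_n · R_f for n ∈ {1, 2, 3}. Then E[R] − R_f = Σ_{h ∈ {s, l}} ( θ₁·E[ε_h²] + θ₂·E[ε_h³] + θ₃·E[ε_h⁴] ). -/
open MeasureTheory

/-- **Proposition 1 (Pricing of Frequency-Dependent Higher Moments).**
With the demeaned return `ε = R − E[R]` split into orthogonal short- and long-run
components `ε = ε_s + ε_l` (with `ε_s·ε_l = 0` a.e.), the cubic pricing kernel
`M = g₀ + g₁·ε + g₂·ε² + g₃·ε³`, the Euler equation `E[R·M] = 1`, `R_f = 1/E[M]`,
and `θ_n = −g_n·R_f`, the excess return satisfies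
`E[R] − R_f = Σ_{h ∈ {s,l}} (θ₁·E[ε_h²] + θ₂·E[ε_h³] + θ₃·E[ε_h⁴])`. -/
theorem pricing_frequency_dependent_higher_moments
    {Ω : Type*} {mΩ : MeasurableSpace Ω} {μ : Measure Ω} [IsProbabilityMeasure μ]
    (R : Ω → ℝ) (hR : Integrable R μ)
    (ε εs εl : Ω → ℝ)
    (hε : ∀ ω, ε ω = R ω - ∫ x, R x ∂μ)
    (hsplit : ∀ ω, ε ω = εs ω + εl ω)
    (horth : ∀ᵐ ω ∂μ, εs ω * εl ω = 0)
    (M : Ω → ℝ) (g₀ g₁ g₂ g₃ : ℝ)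
    (hMdef : ∀ ω, M ω = g₀ + g₁ * ε ω + g₂ * ε ω ^ 2 + g₃ * ε ω ^ 3)
    (hspow : ∀ n, 2 ≤ n → n ≤ 4 → Integrable (fun ω => εs ω ^ n) μ)
    (hlpow : ∀ n, 2 ≤ n → n ≤ 4 → Integrable (fun ω => εl ω ^ n) μ)
    (hεpow : ∀ n, 1 ≤ n → n ≤ 4 → Integrable (fun ω => ε ω ^ n) μ)
    (hRεpow : ∀ n, 1 ≤ n → n ≤ 3 → Integrable (fun ω => R ω * ε ω ^ n) μ)
    (hRM : Integrable (fun ω => R ω * M ω) μ)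
    (hEuler : ∫ ω, R ω * M ω ∂μ = 1)
    (hEM : (∫ ω, M ω ∂μ) ≠ 0)
    (Rf θ₁ θ₂ θ₃ : ℝ)
    (hRf : Rf = 1 / ∫ ω, M ω ∂μ)
    (hθ₁ : θ₁ = -g₁ * Rf) (hθ₂ : θ₂ = -g₂ * Rf) (hθ₃ : θ₃ = -g₃ * Rf) :
    (∫ ω, R ω ∂μ) - Rf =
      (θ₁ * (∫ ω, εs ω ^ 2 ∂μ) + θ₂ * (∫ ω, εs ω ^ 3 ∂μ) +
        θ₃ * (∫ ω, εs ω ^ 4 ∂μ)) +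
      (θ₁ * (∫ ω, εl ω ^ 2 ∂μ) + θ₂ * (∫ ω, εl ω ^ 3 ∂μ) +
        θ₃ * (∫ ω, εl ω ^ 4 ∂μ)) := by
  classical
  set c := ∫ x, R x ∂μ with hc
  have hεint : Integrable ε μ := by
    have h := hεpow 1 le_rfl (by norm_num)
    simpa using h
  have hI2 := hεpow 2 (by norm_num) (by norm_num)
  have hI3 := hεpow 3 (by norm_num) (by norm_num)
  have hI4 := hεpow 4 (by norm_num) (by norm_num)
  have hEε : ∫ ω, ε ω ∂μ = 0 := by
    have h1 : ∫ ω, ε ω ∂μ = ∫ ω, (R ω - c) ∂μ := by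
      apply integral_congr_ae
      filter_upwards with ω using hε ω
    rw [h1, integral_sub hR (integrable_const c), integral_const]
    simp [hc]
  -- E[M]
  have hEM' : ∫ ω, M ω ∂μ =
      g₀ + g₂ * (∫ ω, ε ω ^ 2 ∂μ) + g₃ * (∫ ω, ε ω ^ 3 ∂μ) := by
    have hA : Integrable (fun ω => g₀ + g₁ * ε ω) μ :=
      (integrable_const g₀).add (hεint.const_mul g₁)
    have hB : Integrable (fun ω => g₀ + g₁ * ε ω + g₂ * ε ω ^ 2) μ :=
      hA.add (hI2.const_mul g₂)
    have h1 : ∫ ω, M ω ∂μ =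
        ∫ ω, (g₀ + g₁ * ε ω + g₂ * ε ω ^ 2 + g₃ * ε ω ^ 3) ∂μ := by
      apply integral_congr_ae
      filter_upwards with ω using hMdef ω
    rw [h1, integral_add hB (hI3.const_mul g₃), integral_add hA (hI2.const_mul g₂),
      integral_add (integrable_const g₀) (hεint.const_mul g₁),
      integral_const, integral_const_mul, integral_const_mul, integral_const_mul, hEε]
    simp
  -- E[R εⁿ] = E[ε^{n+1}] + c E[εⁿ]
  have key : ∀ n : ℕ, 1 ≤ n → n ≤ 3 →
      ∫ ω, R ω * ε ω ^ n ∂μ = (∫ ω, ε ω ^ (n + 1) ∂μ) + c * ∫ ω, ε ω ^ n ∂μ := by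
    intro n h1 h3
    have h1' : ∫ ω, R ω * ε ω ^ n ∂μ = ∫ ω, (ε ω ^ (n + 1) + c * ε ω ^ n) ∂μ := by
      apply integral_congr_ae
      filter_upwards with ω
      have h := hε ω
      rw [pow_succ, h]
      ring
    rw [h1', integral_add (hεpow (n+1) (by omega) (by omega))
      ((hεpow n (by omega) (by omega)).const_mul c), integral_const_mul]
  -- Euler expansion
  have hERM : (1 : ℝ) =
      c * (∫ ω, M ω ∂μ) + g₁ * (∫ ω, ε ω ^ 2 ∂μ) + g₂ * (∫ ω, ε ω ^ 3 ∂μ)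
        + g₃ * (∫ ω, ε ω ^ 4 ∂μ) := by
    have hR1 := hRεpow 1 le_rfl (by norm_num)
    have hR2 := hRεpow 2 (by norm_num) (by norm_num)
    have hR3 := hRεpow 3 (by norm_num) (by norm_num)
    have hA : Integrable (fun ω => g₀ * R ω + g₁ * (R ω * ε ω ^ 1)) μ :=
      (hR.const_mul g₀).add (hR1.const_mul g₁)
    have hB : Integrable
        (fun ω => g₀ * R ω + g₁ * (R ω * ε ω ^ 1) + g₂ * (R ω * ε ω ^ 2)) μ :=
      hA.add (hR2.const_mul g₂)
    have h1 : ∫ ω, R ω * M ω ∂μ =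
        ∫ ω, (g₀ * R ω + g₁ * (R ω * ε ω ^ 1) + g₂ * (R ω * ε ω ^ 2)
          + g₃ * (R ω * ε ω ^ 3)) ∂μ := by
      apply integral_congr_ae
      filter_upwards with ω
      rw [hMdef ω]; ring
    rw [← hEuler, h1, integral_add hB (hR3.const_mul g₃), integral_add hA (hR2.const_mul g₂),
      integral_add (hR.const_mul g₀) (hR1.const_mul g₁),
      integral_const_mul, integral_const_mul, integral_const_mul, integral_const_mul,
      key 1 le_rfl (by norm_num), key 2 (by norm_num) (by norm_num),
      key 3 (by norm_num) (by norm_num), hEM']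
    have h2 : ∫ ω, ε ω ^ 1 ∂μ = 0 := by simpa using hEε
    rw [h2]
    ring
  -- moment splitting
  have split2 : ∫ ω, ε ω ^ 2 ∂μ = (∫ ω, εs ω ^ 2 ∂μ) + ∫ ω, εl ω ^ 2 ∂μ := by
    have h1 : ∫ ω, ε ω ^ 2 ∂μ = ∫ ω, (εs ω ^ 2 + εl ω ^ 2) ∂μ := by
      apply integral_congr_ae
      filter_upwards [horth] with ω h
      rw [hsplit ω]; linear_combination (2:ℝ) * h
    rw [h1, integral_add (hspow 2 le_rfl (by norm_num)) (hlpow 2 le_rfl (by norm_num))]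
  have split3 : ∫ ω, ε ω ^ 3 ∂μ = (∫ ω, εs ω ^ 3 ∂μ) + ∫ ω, εl ω ^ 3 ∂μ := by
    have h1 : ∫ ω, ε ω ^ 3 ∂μ = ∫ ω, (εs ω ^ 3 + εl ω ^ 3) ∂μ := by
      apply integral_congr_ae
      filter_upwards [horth] with ω h
      rw [hsplit ω]; linear_combination (3 * εs ω + 3 * εl ω) * h
    rw [h1, integral_add (hspow 3 (by norm_num) (by norm_num))
      (hlpow 3 (by norm_num) (by norm_num))]
  have split4 : ∫ ω, ε ω ^ 4 ∂μ = (∫ ω, εs ω ^ 4 ∂μ) + ∫ ω, εl ω ^ 4 ∂μ := by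
    have h1 : ∫ ω, ε ω ^ 4 ∂μ = ∫ ω, (εs ω ^ 4 + εl ω ^ 4) ∂μ := by
      apply integral_congr_ae
      filter_upwards [horth] with ω h
      rw [hsplit ω]
      linear_combination (4 * εs ω ^ 2 + 6 * εs ω * εl ω + 4 * εl ω ^ 2) * h
    rw [h1, integral_add (hspow 4 (by norm_num) le_rfl) (hlpow 4 (by norm_num) le_rfl)]
  -- conclude
  rw [split2, split3, split4] at hERM
  subst hθ₁ hθ₂ hθ₃ hRf
  have hX : g₁ * ((∫ ω, εs ω ^ 2 ∂μ) + ∫ ω, εl ω ^ 2 ∂μ)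
      + g₂ * ((∫ ω, εs ω ^ 3 ∂μ) + ∫ ω, εl ω ^ 3 ∂μ)
      + g₃ * ((∫ ω, εs ω ^ 4 ∂μ) + ∫ ω, εl ω ^ 4 ∂μ)
      = 1 - c * ∫ ω, M ω ∂μ := by linear_combination -hERM
  have hc1 : c - 1 / (∫ ω, M ω ∂μ) = -(1 / (∫ ω, M ω ∂μ)) * (1 - c * ∫ ω, M ω ∂μ) := by
    field_simp
    ring
  rw [hc1, ← hX]
  ring
end

section
/- Let (Ω, F, μ) be a probability space, let R : Ω → ℝ be integrable, set ε := R − E[R], and suppose ε = ε_s + ε_l for random variables ε_s, ε_l with ε_s · ε_l = 0 almost everywhere. Let g₀, g₁, g₂, g₃ ∈ ℝ define the pricing kernel M := g₀ + g₁·ε + g₂·ε² + g₃·ε³, and assume ε_s^n and ε_l^n for n ∈ {2, 3, 4}, ε^n for n ∈ {1, 2, 3, 4}, R·ε^n for n ∈ {1, 2, 3}, and R·M are integrable, that E[R·M] = 1, and that E[M] ≠ 0. Set R_f := 1 / E[M] and θ_n := −g_n · R_f. Assume moreover that v_h := E[ε_h²] > 0 for h ∈ {s, l}, and define the horizon-specific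 skewness s_h := E[ε_h³] / v_h^{3/2}, kurtosis k_h := E[ε_h⁴] / v_h², and coefficients β_h := θ₁·v_h^{1/2}, δ_h := θ₂·v_h^{3/2}, K_h := θ₃·v_h². Then E[R] − R_f = Σ_{h ∈ {s, l}} ( β_h·√(v_h) + δ_h·s_h + K_h·k_h ). -/
open MeasureTheory

/-- **Equation (rt_final): Proposition 1 in volatility/skewness/kurtosis form.**
With the orthogonal horizon decomposition `ε = ε_s + ε_l` of the demeaned return,
the cubic pricing kernel, the Euler equation, `R_f = 1/E[M]`, `θ_n = −g_n·R_f`,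
positive horizon variances `v_h = E[ε_h²]`, skewness `s_h = E[ε_h³]/v_h^(3/2)`,
kurtosis `k_h = E[ε_h⁴]/v_h²`, and coefficients `β_h = θ₁·v_h^(1/2)`,
`δ_h = θ₂·v_h^(3/2)`, `K_h = θ₃·v_h²`, one has
`E[R] − R_f = Σ_{h ∈ {s,l}} (β_h·√v_h + δ_h·s_h + K_h·k_h)`. -/
theorem pricing_higher_moments_vol_skew_kurt_form
    {Ω : Type*} {mΩ : MeasurableSpace Ω} {μ : Measure Ω} [IsProbabilityMeasure μ]
    (R : Ω → ℝ) (hR : Integrable R μ)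
    (ε εs εl : Ω → ℝ)
    (hε : ∀ ω, ε ω = R ω - ∫ x, R x ∂μ)
    (hsplit : ∀ ω, ε ω = εs ω + εl ω)
    (horth : ∀ᵐ ω ∂μ, εs ω * εl ω = 0)
    (M : Ω → ℝ) (g₀ g₁ g₂ g₃ : ℝ)
    (hMdef : ∀ ω, M ω = g₀ + g₁ * ε ω + g₂ * ε ω ^ 2 + g₃ * ε ω ^ 3)
    (hspow : ∀ n, 2 ≤ n → n ≤ 4 → Integrable (fun ω => εs ω ^ n) μ)
    (hlpow : ∀ n, 2 ≤ n → n ≤ 4 → Integrable (fun ω => εl ω ^ n) μ)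
    (hεpow : ∀ n, 1 ≤ n → n ≤ 4 → Integrable (fun ω => ε ω ^ n) μ)
    (hRεpow : ∀ n, 1 ≤ n → n ≤ 3 → Integrable (fun ω => R ω * ε ω ^ n) μ)
    (hRM : Integrable (fun ω => R ω * M ω) μ)
    (hEuler : ∫ ω, R ω * M ω ∂μ = 1)
    (hEM : (∫ ω, M ω ∂μ) ≠ 0)
    (Rf θ₁ θ₂ θ₃ : ℝ)
    (hRf : Rf = 1 / ∫ ω, M ω ∂μ)
    (hθ₁ : θ₁ = -g₁ * Rf) (hθ₂ : θ₂ = -g₂ * Rf) (hθ₃ : θ₃ = -g₃ * Rf)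
    (vs vl : ℝ)
    (hvs : vs = ∫ ω, εs ω ^ 2 ∂μ) (hvl : vl = ∫ ω, εl ω ^ 2 ∂μ)
    (hvs_pos : 0 < vs) (hvl_pos : 0 < vl)
    (ss sl ks kl βs βl δs δl Ks Kl : ℝ)
    (hss : ss = (∫ ω, εs ω ^ 3 ∂μ) / vs ^ ((3 : ℝ) / 2))
    (hsl : sl = (∫ ω, εl ω ^ 3 ∂μ) / vl ^ ((3 : ℝ) / 2))
    (hks : ks = (∫ ω, εs ω ^ 4 ∂μ) / vs ^ 2)
    (hkl : kl = (∫ ω, εl ω ^ 4 ∂μ) / vl ^ 2)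
    (hβs : βs = θ₁ * vs ^ ((1 : ℝ) / 2)) (hβl : βl = θ₁ * vl ^ ((1 : ℝ) / 2))
    (hδs : δs = θ₂ * vs ^ ((3 : ℝ) / 2)) (hδl : δl = θ₂ * vl ^ ((3 : ℝ) / 2))
    (hKs : Ks = θ₃ * vs ^ 2) (hKl : Kl = θ₃ * vl ^ 2) :
    (∫ ω, R ω ∂μ) - Rf =
      (βs * Real.sqrt vs + δs * ss + Ks * ks) +
      (βl * Real.sqrt vl + δl * sl + Kl * kl) := by
  classical
  set c : ℝ := ∫ ω, R ω ∂μ with hc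
  -- basic integrabilities
  have hεInt : Integrable ε μ := by
    simpa using hεpow 1 le_rfl (by norm_num)
  have I2 := hεpow 2 (by norm_num) (by norm_num)
  have I3 := hεpow 3 (by norm_num) (by norm_num)
  have I4 := hεpow 4 (by norm_num) (by norm_num)
  have hRε1 : Integrable (fun ω => R ω * ε ω) μ := by
    simpa using hRεpow 1 le_rfl (by norm_num)
  have hRε2 := hRεpow 2 (by norm_num) (by norm_num)
  have hRε3 := hRεpow 3 (by norm_num) (by norm_num)
  -- mean of ε is zero
  have hεmean : ∫ ω, ε ω ∂μ = 0 := by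
    have : (fun ω => ε ω) = fun ω => R ω - c := funext hε
    rw [this, integral_sub hR (integrable_const c)]
    simp [hc]
  -- E[M]
  have hEMval : ∫ ω, M ω ∂μ =
      g₀ + g₂ * ∫ ω, ε ω ^ 2 ∂μ + g₃ * ∫ ω, ε ω ^ 3 ∂μ := by
    have hMeq : (fun ω => M ω)
        = fun ω => g₀ + g₁ * ε ω + g₂ * ε ω ^ 2 + g₃ * ε ω ^ 3 := funext hMdef
    have h0 : Integrable (fun ω => g₀ + g₁ * ε ω) μ :=
      (integrable_const _).add (hεInt.const_mul _)
    have h1 : Integrable (fun ω => g₀ + g₁ * ε ω + g₂ * ε ω ^ 2) μ :=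
      h0.add (I2.const_mul _)
    rw [hMeq, integral_add h1 (I3.const_mul _), integral_add h0 (I2.const_mul _),
      integral_add (integrable_const _) (hεInt.const_mul _),
      integral_const_mul, integral_const_mul, integral_const_mul,
      integral_const, hεmean]
    simp
  -- ∫ R * ε^n
  have hRdef : ∀ ω, R ω = ε ω + c := fun ω => by
    have := hε ω; linarith
  have key1 : ∫ ω, R ω * ε ω ∂μ = ∫ ω, ε ω ^ 2 ∂μ := by
    have heq : (fun ω => R ω * ε ω) = fun ω => ε ω ^ 2 + c * ε ω := by
      funext ω; rw [hRdef ω]; ring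
    rw [heq, integral_add I2 (hεInt.const_mul _), integral_const_mul, hεmean]
    ring
  have key2 : ∫ ω, R ω * ε ω ^ 2 ∂μ
      = (∫ ω, ε ω ^ 3 ∂μ) + c * ∫ ω, ε ω ^ 2 ∂μ := by
    have heq : (fun ω => R ω * ε ω ^ 2) = fun ω => ε ω ^ 3 + c * ε ω ^ 2 := by
      funext ω; rw [hRdef ω]; ring
    rw [heq, integral_add I3 (I2.const_mul _), integral_const_mul]
  have key3 : ∫ ω, R ω * ε ω ^ 3 ∂μ
      = (∫ ω, ε ω ^ 4 ∂μ) + c * ∫ ω, ε ω ^ 3 ∂μ := by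
    have heq : (fun ω => R ω * ε ω ^ 3) = fun ω => ε ω ^ 4 + c * ε ω ^ 3 := by
      funext ω; rw [hRdef ω]; ring
    rw [heq, integral_add I4 (I3.const_mul _), integral_const_mul]
  -- E[R M]
  have hRMval : ∫ ω, R ω * M ω ∂μ
      = g₀ * c + g₁ * (∫ ω, ε ω ^ 2 ∂μ)
        + g₂ * ((∫ ω, ε ω ^ 3 ∂μ) + c * ∫ ω, ε ω ^ 2 ∂μ)
        + g₃ * ((∫ ω, ε ω ^ 4 ∂μ) + c * ∫ ω, ε ω ^ 3 ∂μ) := by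
    have hRMeq : (fun ω => R ω * M ω)
        = fun ω => g₀ * R ω + g₁ * (R ω * ε ω) + g₂ * (R ω * ε ω ^ 2)
          + g₃ * (R ω * ε ω ^ 3) := by
      funext ω; rw [hMdef ω]; ring
    have h0 : Integrable (fun ω => g₀ * R ω + g₁ * (R ω * ε ω)) μ :=
      (hR.const_mul _).add (hRε1.const_mul _)
    have h1 : Integrable (fun ω => g₀ * R ω + g₁ * (R ω * ε ω)
        + g₂ * (R ω * ε ω ^ 2)) μ := h0.add (hRε2.const_mul _)
    rw [hRMeq, integral_add h1 (hRε3.const_mul _), integral_add h0 (hRε2.const_mul _),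
      integral_add (hR.const_mul _) (hRε1.const_mul _),
      integral_const_mul, integral_const_mul, integral_const_mul, integral_const_mul,
      key1, key2, key3]
  -- orthogonal split of moments
  have split2 : ∫ ω, ε ω ^ 2 ∂μ = vs + vl := by
    have hae : (fun ω => ε ω ^ 2) =ᵐ[μ] fun ω => εs ω ^ 2 + εl ω ^ 2 := by
      filter_upwards [horth] with ω h
      rw [hsplit ω]; linear_combination (2 : ℝ) * h
    rw [integral_congr_ae hae,
      integral_add (hspow 2 (by norm_num) (by norm_num)) (hlpow 2 (by norm_num) (by norm_num)),
      hvs, hvl]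
  have split3 : ∫ ω, ε ω ^ 3 ∂μ = (∫ ω, εs ω ^ 3 ∂μ) + ∫ ω, εl ω ^ 3 ∂μ := by
    have hae : (fun ω => ε ω ^ 3) =ᵐ[μ] fun ω => εs ω ^ 3 + εl ω ^ 3 := by
      filter_upwards [horth] with ω h
      rw [hsplit ω]; linear_combination (3 * εs ω + 3 * εl ω) * h
    rw [integral_congr_ae hae,
      integral_add (hspow 3 (by norm_num) (by norm_num)) (hlpow 3 (by norm_num) (by norm_num))]
  have split4 : ∫ ω, ε ω ^ 4 ∂μ = (∫ ω, εs ω ^ 4 ∂μ) + ∫ ω, εl ω ^ 4 ∂μ := by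
    have hae : (fun ω => ε ω ^ 4) =ᵐ[μ] fun ω => εs ω ^ 4 + εl ω ^ 4 := by
      filter_upwards [horth] with ω h
      rw [hsplit ω]
      linear_combination (4 * εs ω ^ 2 + 6 * (εs ω * εl ω) + 4 * εl ω ^ 2) * h
    rw [integral_congr_ae hae,
      integral_add (hspow 4 (by norm_num) (by norm_num)) (hlpow 4 (by norm_num) (by norm_num))]
  -- Euler identity rearranged
  have hmain : c * (∫ ω, M ω ∂μ)
      + (g₁ * (∫ ω, ε ω ^ 2 ∂μ) + g₂ * (∫ ω, ε ω ^ 3 ∂μ) + g₃ * ∫ ω, ε ω ^ 4 ∂μ) = 1 := by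
    rw [hEMval]; rw [hRMval] at hEuler; linarith
  rw [split2, split3, split4] at hmain
  -- simplify the RHS
  have hvs32 : (vs : ℝ) ^ ((3 : ℝ) / 2) ≠ 0 := (Real.rpow_pos_of_pos hvs_pos _).ne'
  have hvl32 : (vl : ℝ) ^ ((3 : ℝ) / 2) ≠ 0 := (Real.rpow_pos_of_pos hvl_pos _).ne'
  have hβsqs : βs * Real.sqrt vs = θ₁ * vs := by
    rw [hβs, ← Real.sqrt_eq_rpow, mul_assoc, Real.mul_self_sqrt hvs_pos.le]
  have hβsql : βl * Real.sqrt vl = θ₁ * vl := by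
    rw [hβl, ← Real.sqrt_eq_rpow, mul_assoc, Real.mul_self_sqrt hvl_pos.le]
  have hδss : δs * ss = θ₂ * ∫ ω, εs ω ^ 3 ∂μ := by
    rw [hδs, hss]; field_simp
  have hδsl : δl * sl = θ₂ * ∫ ω, εl ω ^ 3 ∂μ := by
    rw [hδl, hsl]; field_simp
  have hKss : Ks * ks = θ₃ * ∫ ω, εs ω ^ 4 ∂μ := by
    rw [hKs, hks]; field_simp
  have hKsl : Kl * kl = θ₃ * ∫ ω, εl ω ^ 4 ∂μ := by
    rw [hKl, hkl]; field_simp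
  rw [hβsqs, hβsql, hδss, hδsl, hKss, hKsl, hθ₁, hθ₂, hθ₃, hRf]
  field_simp
  linear_combination hmain
end
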